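/- Let c, s, L, E, I, A, A*, G > 0 and a, u, v > 0 with a ≠ 8, a ≠ 16, u ≠ 4, v ≠ 4 be reals, let x₀ ∈ [0,1), and let P ≥ 1 be an integer. Then H(P,x₀) = 2·c·s·L·( (10·L²/(3·E·I))·(1 − (a/16)^P)/(16 − a) − (20·L²/(3·E·I·a))·C_{P,a/16}(x₀) − 2·L²·((1/2)^P − (a/16)^P)/(E·I·(8 − a)) + (L²/(2^{P−2}·E·I·a))·C_{P,a/8}(x₀) + (2/(E·A·u))·C_{P,u/4}(x₀) − (1/(E·A·u))·(1 − (u/4)^P)/((4/u) − 1) + (1/(G·A*·v))·(1 − (v/4)^P)/((4/v) − 1) − (2/(G·A*·v))·C_{P,v/4}(x₀) ). -/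

import Mathlib

/-- The `k`-th binary digit of `x ∈ [0,1)`: ρ_k(x) = ⌊2^k x⌋ − 2⌊2^{k−1} x⌋. -/
noncomputable def binDigit (k : ℕ) (x : ℝ) : ℤ := ⌊(2:ℝ) ^ k * x⌋ - 2 * ⌊(2:ℝ) ^ (k - 1) * x⌋

/-- The partial sum C_{P,t}(x) = Σ_{k=1}^P ρ_k(x) t^k. -/
noncomputable def Cpart (P : ℕ) (t x : ℝ) : ℝ :=
  ∑ k ∈ Finset.Icc 1 P, (binDigit k x : ℝ) * t ^ k

/-- Horizontal displacement per unit load of the end node located at `x₀` in a binary tree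
structure with `P` levels, from the Principle of Virtual Work (bending + axial + shear). -/
noncomputable def Hdisp (c s L E I A A' G a u v x₀ : ℝ) (P : ℕ) : ℝ :=
  (∑ i ∈ Finset.Icc 1 P, (a ^ (i - 1) / (E * I)) *
      ∫ x in (0:ℝ)..(L * 2 ^ ((1:ℤ) - (i:ℤ))),
        (s * L * (2 ^ ((2:ℤ) - (i:ℤ)) - 2 ^ ((1:ℤ) - (P:ℤ))) - s * x) *
          (1 - 2 * (binDigit i x₀ : ℝ)) *
          (c * 2 ^ (-(i:ℤ)) * (L * 2 ^ ((1:ℤ) - (i:ℤ)) - x))) +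
  (∑ i ∈ Finset.Icc 1 P,
      c * s * (2 * (binDigit i x₀ : ℝ) - 1) * 2 ^ (-(i:ℤ)) * L * 2 ^ ((1:ℤ) - (i:ℤ)) *
        u ^ (i - 1) / (E * A)) +
  (∑ i ∈ Finset.Icc 1 P,
      c * s * (1 - 2 * (binDigit i x₀ : ℝ)) * 2 ^ (-(i:ℤ)) * L * 2 ^ ((1:ℤ) - (i:ℤ)) *
        v ^ (i - 1) / (G * A'))

lemma integral_quadratic (p q r ℓ : ℝ) :
    ∫ x in (0:ℝ)..ℓ, (p + q * x + r * x ^ 2) = p * ℓ + q * ℓ ^ 2 / 2 + r * ℓ ^ 3 / 3 := by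
  have h1 : IntervalIntegrable (fun x : ℝ => p + q * x) MeasureTheory.volume 0 ℓ :=
    (by continuity : Continuous fun x : ℝ => p + q * x).intervalIntegrable _ _
  have h2 : IntervalIntegrable (fun x : ℝ => r * x ^ 2) MeasureTheory.volume 0 ℓ :=
    (by continuity : Continuous fun x : ℝ => r * x ^ 2).intervalIntegrable _ _
  have h3 : IntervalIntegrable (fun x : ℝ => p) MeasureTheory.volume 0 ℓ :=
    intervalIntegrable_const
  have h4 : IntervalIntegrable (fun x : ℝ => q * x) MeasureTheory.volume 0 ℓ :=
    (by continuity : Continuous fun x : ℝ => q * x).intervalIntegrable _ _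
  rw [intervalIntegral.integral_add h1 h2, intervalIntegral.integral_add h3 h4,
    intervalIntegral.integral_const, intervalIntegral.integral_const_mul,
    intervalIntegral.integral_const_mul, integral_id, integral_pow, smul_eq_mul]
  push_cast
  ring

lemma geom_Icc (r : ℝ) (hr : r ≠ 1) (P : ℕ) :
    ∑ i ∈ Finset.Icc 1 P, r ^ i = r * (1 - r ^ P) / (1 - r) := by
  have h1 : (1:ℝ) - r ≠ 0 := sub_ne_zero.mpr (Ne.symm hr)
  induction P with
  | zero => simp
  | succ n ih =>
    rw [Finset.sum_Icc_succ_top (by omega), ih]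
    field_simp
    ring

lemma pow16 (n : ℕ) : (16:ℝ) ^ n = ((2:ℝ) ^ n) ^ 4 := by
  rw [show (16:ℝ) = 2 ^ 4 by norm_num, ← pow_mul, mul_comm, pow_mul]

lemma pow8 (n : ℕ) : (8:ℝ) ^ n = ((2:ℝ) ^ n) ^ 3 := by
  rw [show (8:ℝ) = 2 ^ 3 by norm_num, ← pow_mul, mul_comm, pow_mul]

lemma pow4' (n : ℕ) : (4:ℝ) ^ n = ((2:ℝ) ^ n) ^ 2 := by
  rw [show (4:ℝ) = 2 ^ 2 by norm_num, ← pow_mul, mul_comm, pow_mul]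

lemma bend_term (c s L E I a : ℝ) (hE : E ≠ 0) (hI : I ≠ 0) (ha : a ≠ 0) (P : ℕ) (ρ : ℝ) (n : ℕ) :
    (a ^ ((n+1) - 1) / (E * I)) *
      (∫ x in (0:ℝ)..(L * 2 ^ ((1:ℤ) - ((n+1:ℕ):ℤ))),
        (s * L * (2 ^ ((2:ℤ) - ((n+1:ℕ):ℤ)) - 2 ^ ((1:ℤ) - (P:ℤ))) - s * x) *
          (1 - 2 * ρ) * (c * 2 ^ (-((n+1:ℕ):ℤ)) * (L * 2 ^ ((1:ℤ) - ((n+1:ℕ):ℤ)) - x)))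
    = (20/3) * (c*s*L^3/(E*I*a)) * (a/16)^(n+1)
      - (40/3) * (c*s*L^3/(E*I*a)) * (ρ * (a/16)^(n+1))
      - (2 * (2:ℝ) ^ ((1:ℤ)-(P:ℤ)) * (c*s*L^3/(E*I*a))) * (a/8)^(n+1)
      + (4 * (2:ℝ) ^ ((1:ℤ)-(P:ℤ)) * (c*s*L^3/(E*I*a))) * (ρ * (a/8)^(n+1)) := by
  have h2 : (2:ℝ) ≠ 0 := two_ne_zero
  set D := (2:ℝ) ^ ((1:ℤ)-(P:ℤ)) with hD
  set ℓ := L * 2 ^ ((1:ℤ) - ((n+1:ℕ):ℤ)) with hℓ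
  set M := s * L * (2 ^ ((2:ℤ) - ((n+1:ℕ):ℤ)) - D) with hM
  set K := (1 - 2*ρ) * c * 2 ^ (-((n+1:ℕ):ℤ)) with hK
  have hcong : ∀ x ∈ Set.uIcc (0:ℝ) ℓ,
      (M - s * x) * (1 - 2 * ρ) * (c * 2 ^ (-((n+1:ℕ):ℤ)) * (ℓ - x))
      = (K * M * ℓ) + (-(K * (M + s * ℓ))) * x + (K * s) * x ^ 2 := by
    intro x _
    rw [hK]; ring
  rw [intervalIntegral.integral_congr hcong, integral_quadratic]
  have e1 : (2:ℝ) ^ ((1:ℤ) - ((n+1:ℕ):ℤ)) = ((2:ℝ)^n)⁻¹ := by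
    rw [show (1:ℤ) - ((n+1:ℕ):ℤ) = -(n:ℤ) by push_cast; ring, zpow_neg, zpow_natCast]
  have e2 : (2:ℝ) ^ ((2:ℤ) - ((n+1:ℕ):ℤ)) = 2 * ((2:ℝ)^n)⁻¹ := by
    rw [show (2:ℤ) - ((n+1:ℕ):ℤ) = 1 + -(n:ℤ) by push_cast; ring,
      zpow_add₀ h2, zpow_one, zpow_neg, zpow_natCast]
  have e3 : (2:ℝ) ^ (-((n+1:ℕ):ℤ)) = ((2:ℝ) * 2^n)⁻¹ := by
    rw [zpow_neg, zpow_natCast, pow_succ, mul_comm]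
  have h2n : ((2:ℝ)^n) ≠ 0 := pow_ne_zero _ h2
  have h2n1 : ((2:ℝ)^(n+1)) ≠ 0 := pow_ne_zero _ h2
  rw [hK, hM, hℓ, e1, e2, e3]
  simp only [add_tsub_cancel_right, div_pow, pow16, pow8]
  field_simp
  ring

lemma ax_term (c s L E A u : ℝ) (hE : E ≠ 0) (hA : A ≠ 0) (hu : u ≠ 0) (ρ : ℝ) (n : ℕ) :
    c * s * (2 * ρ - 1) * 2 ^ (-((n+1:ℕ):ℤ)) * L * 2 ^ ((1:ℤ) - ((n+1:ℕ):ℤ)) *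
        u ^ ((n+1) - 1) / (E * A)
    = (4*c*s*L/(E*A*u)) * (ρ * (u/4)^(n+1)) - (2*c*s*L/(E*A*u)) * (u/4)^(n+1) := by
  have h2 : (2:ℝ) ≠ 0 := two_ne_zero
  have e1 : (2:ℝ) ^ ((1:ℤ) - ((n+1:ℕ):ℤ)) = ((2:ℝ)^n)⁻¹ := by
    rw [show (1:ℤ) - ((n+1:ℕ):ℤ) = -(n:ℤ) by push_cast; ring, zpow_neg, zpow_natCast]
  have e3 : (2:ℝ) ^ (-((n+1:ℕ):ℤ)) = ((2:ℝ) * 2^n)⁻¹ := by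
    rw [zpow_neg, zpow_natCast, pow_succ, mul_comm]
  have h2n : ((2:ℝ)^n) ≠ 0 := pow_ne_zero _ h2
  have h2n1 : ((2:ℝ)^(n+1)) ≠ 0 := pow_ne_zero _ h2
  rw [e1, e3]
  simp only [add_tsub_cancel_right, div_pow, pow4']
  field_simp
  ring

lemma sh_term (c s L G A' v : ℝ) (hG : G ≠ 0) (hA' : A' ≠ 0) (hv : v ≠ 0) (ρ : ℝ) (n : ℕ) :
    c * s * (1 - 2 * ρ) * 2 ^ (-((n+1:ℕ):ℤ)) * L * 2 ^ ((1:ℤ) - ((n+1:ℕ):ℤ)) *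
        v ^ ((n+1) - 1) / (G * A')
    = (2*c*s*L/(G*A'*v)) * (v/4)^(n+1) - (4*c*s*L/(G*A'*v)) * (ρ * (v/4)^(n+1)) := by
  have h2 : (2:ℝ) ≠ 0 := two_ne_zero
  have e1 : (2:ℝ) ^ ((1:ℤ) - ((n+1:ℕ):ℤ)) = ((2:ℝ)^n)⁻¹ := by
    rw [show (1:ℤ) - ((n+1:ℕ):ℤ) = -(n:ℤ) by push_cast; ring, zpow_neg, zpow_natCast]
  have e3 : (2:ℝ) ^ (-((n+1:ℕ):ℤ)) = ((2:ℝ) * 2^n)⁻¹ := by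
    rw [zpow_neg, zpow_natCast, pow_succ, mul_comm]
  have h2n : ((2:ℝ)^n) ≠ 0 := pow_ne_zero _ h2
  have h2n1 : ((2:ℝ)^(n+1)) ≠ 0 := pow_ne_zero _ h2
  rw [e1, e3]
  simp only [add_tsub_cancel_right, div_pow, pow4']
  field_simp
  ring

set_option maxHeartbeats 1000000 in
lemma bend_sum (c s L E I a x₀ : ℝ) (hE : E ≠ 0) (hI : I ≠ 0) (ha : a ≠ 0)
    (ha8 : a ≠ 8) (ha16 : a ≠ 16) (P : ℕ) :
    (∑ i ∈ Finset.Icc 1 P, (a ^ (i - 1) / (E * I)) *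
      ∫ x in (0:ℝ)..(L * 2 ^ ((1:ℤ) - (i:ℤ))),
        (s * L * (2 ^ ((2:ℤ) - (i:ℤ)) - 2 ^ ((1:ℤ) - (P:ℤ))) - s * x) *
          (1 - 2 * (binDigit i x₀ : ℝ)) *
          (c * 2 ^ (-(i:ℤ)) * (L * 2 ^ ((1:ℤ) - (i:ℤ)) - x)))
    = 2 * c * s * L *
        ((10 * L ^ 2 / (3 * E * I)) * ((1 - (a / 16) ^ P) / (16 - a)) -
          (20 * L ^ 2 / (3 * E * I * a)) * Cpart P (a / 16) x₀ -
          2 * L ^ 2 * (((1 / 2) ^ P - (a / 16) ^ P) / (E * I * (8 - a))) +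
          (L ^ 2 / (2 ^ ((P:ℤ) - 2) * E * I * a)) * Cpart P (a / 8) x₀) := by
  have h2 : (2:ℝ) ≠ 0 := two_ne_zero
  have h16n1 : a / 16 ≠ 1 := by
    intro h; rw [div_eq_one_iff_eq (by norm_num : (16:ℝ) ≠ 0)] at h; exact ha16 h
  have h8n1 : a / 8 ≠ 1 := by
    intro h; rw [div_eq_one_iff_eq (by norm_num : (8:ℝ) ≠ 0)] at h; exact ha8 h
  have hterm : ∀ i ∈ Finset.Icc 1 P,
      (a ^ (i - 1) / (E * I)) *
      (∫ x in (0:ℝ)..(L * 2 ^ ((1:ℤ) - (i:ℤ))),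
        (s * L * (2 ^ ((2:ℤ) - (i:ℤ)) - 2 ^ ((1:ℤ) - (P:ℤ))) - s * x) *
          (1 - 2 * (binDigit i x₀ : ℝ)) *
          (c * 2 ^ (-(i:ℤ)) * (L * 2 ^ ((1:ℤ) - (i:ℤ)) - x)))
      = (20/3) * (c*s*L^3/(E*I*a)) * (a/16)^i
        - (40/3) * (c*s*L^3/(E*I*a)) * ((binDigit i x₀ : ℝ) * (a/16)^i)
        - (2 * (2:ℝ) ^ ((1:ℤ)-(P:ℤ)) * (c*s*L^3/(E*I*a))) * (a/8)^i
        + (4 * (2:ℝ) ^ ((1:ℤ)-(P:ℤ)) * (c*s*L^3/(E*I*a))) * ((binDigit i x₀ : ℝ) * (a/8)^i) := by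
    intro i hi
    rw [Finset.mem_Icc] at hi
    obtain ⟨n, rfl⟩ : ∃ n, i = n + 1 := ⟨i - 1, by omega⟩
    exact bend_term c s L E I a hE hI ha P _ n
  rw [Finset.sum_congr rfl hterm]
  simp only [Finset.sum_sub_distrib, Finset.sum_add_distrib, ← Finset.mul_sum]
  rw [geom_Icc _ h16n1, geom_Icc _ h8n1]
  unfold Cpart
  have hD : (2:ℝ) ^ ((1:ℤ)-(P:ℤ)) = 2 / 2^P := by
    rw [zpow_sub₀ h2, zpow_one, zpow_natCast]
  have hP2 : (2:ℝ) ^ ((P:ℤ)-2) = 2^P / 4 := by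
    rw [zpow_sub₀ h2, zpow_natCast]; norm_num
  rw [hD, hP2]
  have h16a : (16:ℝ) - a ≠ 0 := sub_ne_zero.mpr (Ne.symm ha16)
  have h8a : (8:ℝ) - a ≠ 0 := sub_ne_zero.mpr (Ne.symm ha8)
  have h16a' : (1:ℝ) - a/16 ≠ 0 := sub_ne_zero.mpr (Ne.symm h16n1)
  have h8a' : (1:ℝ) - a/8 ≠ 0 := sub_ne_zero.mpr (Ne.symm h8n1)
  have h2P : ((2:ℝ)^P) ≠ 0 := pow_ne_zero _ h2
  simp only [div_pow, pow16, pow8, one_div, inv_pow, one_pow]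
  field_simp
  ring

set_option maxHeartbeats 1000000 in
lemma ax_sum (c s L E A u x₀ : ℝ) (hE : E ≠ 0) (hA : A ≠ 0) (hu : u ≠ 0)
    (hu4 : u ≠ 4) (P : ℕ) :
    (∑ i ∈ Finset.Icc 1 P,
      c * s * (2 * (binDigit i x₀ : ℝ) - 1) * 2 ^ (-(i:ℤ)) * L * 2 ^ ((1:ℤ) - (i:ℤ)) *
        u ^ (i - 1) / (E * A))
    = 2 * c * s * L *
        ((2 / (E * A * u)) * Cpart P (u / 4) x₀ -
          (1 / (E * A * u)) * ((1 - (u / 4) ^ P) / (4 / u - 1))) := by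
  have h2 : (2:ℝ) ≠ 0 := two_ne_zero
  have h4n1 : u / 4 ≠ 1 := by
    intro h; rw [div_eq_one_iff_eq (by norm_num : (4:ℝ) ≠ 0)] at h; exact hu4 h
  have hterm : ∀ i ∈ Finset.Icc 1 P,
      c * s * (2 * (binDigit i x₀ : ℝ) - 1) * 2 ^ (-(i:ℤ)) * L * 2 ^ ((1:ℤ) - (i:ℤ)) *
        u ^ (i - 1) / (E * A)
      = (4*c*s*L/(E*A*u)) * ((binDigit i x₀ : ℝ) * (u/4)^i)
        - (2*c*s*L/(E*A*u)) * (u/4)^i := by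
    intro i hi
    rw [Finset.mem_Icc] at hi
    obtain ⟨n, rfl⟩ : ∃ n, i = n + 1 := ⟨i - 1, by omega⟩
    exact ax_term c s L E A u hE hA hu _ n
  rw [Finset.sum_congr rfl hterm]
  simp only [Finset.sum_sub_distrib, ← Finset.mul_sum]
  rw [geom_Icc _ h4n1]
  unfold Cpart
  have h4u : (4:ℝ)/u - 1 ≠ 0 := by
    intro h
    apply hu4
    have : (4:ℝ)/u = 1 := by linarith
    rw [div_eq_one_iff_eq hu] at this
    linarith
  have h4u' : (1:ℝ) - u/4 ≠ 0 := sub_ne_zero.mpr (Ne.symm h4n1)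
  have h4u2 : (4:ℝ) - u ≠ 0 := sub_ne_zero.mpr (Ne.symm hu4)
  have h4P : ((4:ℝ)^P) ≠ 0 := pow_ne_zero _ (by norm_num)
  rw [show (4:ℝ)/u - 1 = (4 - u)/u by field_simp, show (1:ℝ) - u/4 = (4 - u)/4 by ring]
  field_simp
  ring

set_option maxHeartbeats 1000000 in
lemma sh_sum (c s L G A' v x₀ : ℝ) (hG : G ≠ 0) (hA' : A' ≠ 0) (hv : v ≠ 0)
    (hv4 : v ≠ 4) (P : ℕ) :
    (∑ i ∈ Finset.Icc 1 P,
      c * s * (1 - 2 * (binDigit i x₀ : ℝ)) * 2 ^ (-(i:ℤ)) * L * 2 ^ ((1:ℤ) - (i:ℤ)) *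
        v ^ (i - 1) / (G * A'))
    = 2 * c * s * L *
        ((1 / (G * A' * v)) * ((1 - (v / 4) ^ P) / (4 / v - 1)) -
          (2 / (G * A' * v)) * Cpart P (v / 4) x₀) := by
  have h2 : (2:ℝ) ≠ 0 := two_ne_zero
  have h4n1 : v / 4 ≠ 1 := by
    intro h; rw [div_eq_one_iff_eq (by norm_num : (4:ℝ) ≠ 0)] at h; exact hv4 h
  have hterm : ∀ i ∈ Finset.Icc 1 P,
      c * s * (1 - 2 * (binDigit i x₀ : ℝ)) * 2 ^ (-(i:ℤ)) * L * 2 ^ ((1:ℤ) - (i:ℤ)) *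
        v ^ (i - 1) / (G * A')
      = (2*c*s*L/(G*A'*v)) * (v/4)^i
        - (4*c*s*L/(G*A'*v)) * ((binDigit i x₀ : ℝ) * (v/4)^i) := by
    intro i hi
    rw [Finset.mem_Icc] at hi
    obtain ⟨n, rfl⟩ : ∃ n, i = n + 1 := ⟨i - 1, by omega⟩
    exact sh_term c s L G A' v hG hA' hv _ n
  rw [Finset.sum_congr rfl hterm]
  simp only [Finset.sum_sub_distrib, ← Finset.mul_sum]
  rw [geom_Icc _ h4n1]
  unfold Cpart
  have h4v : (4:ℝ)/v - 1 ≠ 0 := by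
    intro h
    apply hv4
    have : (4:ℝ)/v = 1 := by linarith
    rw [div_eq_one_iff_eq hv] at this
    linarith
  have h4v' : (1:ℝ) - v/4 ≠ 0 := sub_ne_zero.mpr (Ne.symm h4n1)
  have h4v2 : (4:ℝ) - v ≠ 0 := sub_ne_zero.mpr (Ne.symm hv4)
  have h4P : ((4:ℝ)^P) ≠ 0 := pow_ne_zero _ (by norm_num)
  rw [show (4:ℝ)/v - 1 = (4 - v)/v by field_simp, show (1:ℝ) - v/4 = (4 - v)/4 by ring]
  field_simp
  ring

/-- Closed form of the horizontal displacement of the end node at `x₀` for a finite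
structure with `P` levels, when `a ≠ 8`, `a ≠ 16`, `u ≠ 4`, `v ≠ 4`. -/
theorem horizontal_displacement_finite (c s L E I A A' G a u v : ℝ)
    (hc : 0 < c) (hs : 0 < s) (hL : 0 < L) (hE : 0 < E) (hI : 0 < I)
    (hA : 0 < A) (hA' : 0 < A') (hG : 0 < G)
    (ha : 0 < a) (hu : 0 < u) (hv : 0 < v)
    (ha8 : a ≠ 8) (ha16 : a ≠ 16) (hu4 : u ≠ 4) (hv4 : v ≠ 4)
    (x₀ : ℝ) (hx₀ : x₀ ∈ Set.Ico (0:ℝ) 1) (P : ℕ) (hP : 1 ≤ P) :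
    Hdisp c s L E I A A' G a u v x₀ P =
      2 * c * s * L *
        ((10 * L ^ 2 / (3 * E * I)) * ((1 - (a / 16) ^ P) / (16 - a)) -
          (20 * L ^ 2 / (3 * E * I * a)) * Cpart P (a / 16) x₀ -
          2 * L ^ 2 * (((1 / 2) ^ P - (a / 16) ^ P) / (E * I * (8 - a))) +
          (L ^ 2 / (2 ^ ((P:ℤ) - 2) * E * I * a)) * Cpart P (a / 8) x₀ +
          (2 / (E * A * u)) * Cpart P (u / 4) x₀ -
          (1 / (E * A * u)) * ((1 - (u / 4) ^ P) / (4 / u - 1)) +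
          (1 / (G * A' * v)) * ((1 - (v / 4) ^ P) / (4 / v - 1)) -
          (2 / (G * A' * v)) * Cpart P (v / 4) x₀) := by
  unfold Hdisp
  rw [bend_sum c s L E I a x₀ hE.ne' hI.ne' ha.ne' ha8 ha16 P,
    ax_sum c s L E A u x₀ hE.ne' hA.ne' hu.ne' hu4 P,
    sh_sum c s L G A' v x₀ hG.ne' hA'.ne' hv.ne' hv4 P]
  ring
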